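/- Let d = xy with x > 1, and let x̃ = x/p and ỹ = yp for a prime p dividing x. For the KD-classical pure states ψ_{ms} associated with factorization d = xy and ψ_{m̃s̃} associated with factorization d = x̃ỹ (as projection operators), the following operator identity holds in the case d = p^r: ∑_{j_{α-1}=0}^{p-1} |ψ_{(i_0,…,i_{β-1}),(j_0,…,j_{α-1})}⟩⟨ψ_{(i_0,…,i_{β-1}),(j_0,…,j_{α-1})}| = ∑_{i_β=0}^{p-1} |ψ_{(i_0,…,i_β),(j_0,…,j_{α-2})}⟩⟨ψ_{(i_0,…,i_β),(j_0,…,j_{α-2})}|, where indices are written in p-adic expansion with x = p^α, y = p^β, α + β = r, and 1 ≤ α ≤ r-1. -/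

import Mathlib

open Finset Complex
open scoped ComplexOrder

/-- ω_n = e^{2πi/n} -/
noncomputable def ww (n : ℕ) : ℂ := Complex.exp (2 * Real.pi * Complex.I / n)

/-- |ψ_{m,s}⟩ = (1/√x) ∑_{k<x} ω_x^{sk} |a_{ky+m}⟩ in ℂ^d (standard basis coords). -/
noncomputable def psi (d x y m s : ℕ) : Fin d → ℂ :=
  fun t => (1 / Real.sqrt x) *
    ∑ k ∈ Finset.range x, ww x ^ (s * k) * (if (t : ℕ) = k * y + m then 1 else 0)

/-- Fourier basis vector |b_j⟩, coordinates in the standard basis. -/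
noncomputable def bvec (d j : ℕ) : Fin d → ℂ :=
  fun i => ww d ^ ((i : ℕ) * j) / Real.sqrt d

/-- rank one projection |v⟩⟨v| as a matrix. -/
noncomputable def proj {d : ℕ} (v : Fin d → ℂ) : Matrix (Fin d) (Fin d) ℂ :=
  fun i j => v i * (starRingEnd ℂ) (v j)

/-- KD quasiprobability Q_{ij}(ρ) = ⟨a_i|ρ|b_j⟩⟨b_j|a_i⟩ (standard/Fourier bases). -/
noncomputable def KD {d : ℕ} (ρ : Matrix (Fin d) (Fin d) ℂ) (i j : Fin d) : ℂ :=
  (∑ l, ρ i l * bvec d (j : ℕ) l) * (starRingEnd ℂ) (bvec d (j : ℕ) i)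

/-- The set of KD-classical pure-state projections for the DFT pair in dimension d. -/
def pureKD (d : ℕ) : Set (Matrix (Fin d) (Fin d) ℂ) :=
  {M | ∃ x y m s : ℕ, x * y = d ∧ m < y ∧ s < x ∧ M = proj (psi d x y m s)}

/- ### Auxiliary lemmas -/

lemma ww_ne_zero (n : ℕ) : ww n ≠ 0 := Complex.exp_ne_zero _

lemma ww_pow_mul (a b : ℕ) (ha : a ≠ 0) (hb : b ≠ 0) : ww (a * b) ^ a = ww b := by
  rw [ww, ww, ← Complex.exp_nat_mul]
  congr 1
  have ha' : (a:ℂ) ≠ 0 := Nat.cast_ne_zero.mpr ha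
  have hb' : (b:ℂ) ≠ 0 := Nat.cast_ne_zero.mpr hb
  push_cast
  field_simp

lemma ww_pow_self (n : ℕ) (hn : n ≠ 0) : ww n ^ n = 1 := by
  have := ww_pow_mul n 1 hn one_ne_zero
  rw [mul_one] at this
  rw [this, ww]
  simpa using Complex.exp_two_pi_mul_I

lemma conj_ww (n : ℕ) : (starRingEnd ℂ) (ww n) = (ww n)⁻¹ := by
  rw [ww, ← Complex.exp_conj, ← Complex.exp_neg]
  congr 1
  rw [map_div₀]
  simp [Complex.conj_I, map_ofNat]
  ring

/-- `E n c = ω_n^c` for integer `c`. -/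
noncomputable def E (n : ℕ) (c : ℤ) : ℂ := ww n ^ c

lemma E_add (n : ℕ) (a b : ℤ) : E n (a + b) = E n a * E n b :=
  zpow_add₀ (ww_ne_zero n) a b

lemma E_natCast (n k : ℕ) : ww n ^ k = E n (k : ℤ) := (zpow_natCast _ _).symm

lemma conj_E (n : ℕ) (c : ℤ) : (starRingEnd ℂ) (E n c) = E n (-c) := by
  rw [E, E, map_zpow₀, conj_ww, inv_zpow, ← zpow_neg]

lemma E_eq_one_iff (n : ℕ) (hn : n ≠ 0) (c : ℤ) : E n c = 1 ↔ (n:ℤ) ∣ c :=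
  (Complex.isPrimitiveRoot_exp n hn).zpow_eq_one_iff_dvd c

lemma sum_E (p : ℕ) (hpn : p ≠ 0) (c : ℤ) :
    ∑ j ∈ Finset.range p, E p c ^ j = if (p:ℤ) ∣ c then (p : ℂ) else 0 := by
  by_cases h : (p:ℤ) ∣ c
  · rw [if_pos h, (E_eq_one_iff p hpn c).mpr h]
    simp
  · have h1 : E p c ≠ 1 := fun hc => h ((E_eq_one_iff p hpn c).mp hc)
    rw [if_neg h, geom_sum_eq h1]
    have : E p c ^ p = 1 := by
      rw [E, ← zpow_natCast, ← zpow_mul, mul_comm, zpow_mul, zpow_natCast,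
        ww_pow_self p hpn, one_zpow]
    rw [this, sub_self, zero_div]

lemma E_mul_base (a b : ℕ) (ha : a ≠ 0) (hb : b ≠ 0) (c : ℤ) :
    E (a * b) ((a:ℤ) * c) = E b c := by
  rw [E, E, zpow_mul, zpow_natCast, ww_pow_mul a b ha hb]

lemma E_nat_mul (n j : ℕ) (c : ℤ) : E n ((j:ℤ) * c) = E n c ^ j := by
  rw [E, E, mul_comm, zpow_mul, zpow_natCast]

lemma pow_mul_conj (n a b : ℕ) :
    ww n ^ a * (starRingEnd ℂ) (ww n ^ b) = E n ((a:ℤ) - (b:ℤ)) := by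
  rw [E_natCast, E_natCast, conj_E, ← E_add, sub_eq_add_neg]

lemma sum_ind (x y m t : ℕ) (hm : m < y) (ht : t < x * y) (f : ℕ → ℂ) :
    ∑ k ∈ Finset.range x, f k * (if t = k * y + m then 1 else 0)
      = if t % y = m then f (t / y) else 0 := by
  have hy : 0 < y := lt_of_le_of_lt (Nat.zero_le m) hm
  by_cases h : t % y = m
  · rw [if_pos h, Finset.sum_eq_single (t / y)]
    · rw [if_pos, mul_one]
      rw [← h, mul_comm]
      exact (Nat.div_add_mod t y).symm
    · intro k _ hk
      rw [if_neg, mul_zero]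
      intro heq
      apply hk
      rw [heq, mul_comm, Nat.mul_add_div hy, Nat.div_eq_of_lt hm, add_zero]
    · intro hmem
      exact absurd (Finset.mem_range.mpr ((Nat.div_lt_iff_lt_mul hy).mpr ht)) hmem
  · rw [if_neg h]
    apply Finset.sum_eq_zero
    intro k _
    rw [if_neg, mul_zero]
    intro heq
    apply h
    rw [heq, mul_comm, Nat.mul_add_mod, Nat.mod_eq_of_lt hm]

lemma psi_eq (d x y m s : ℕ) (hm : m < y) (t : Fin d) (ht : (t:ℕ) < x * y) :
    psi d x y m s t = (1 / ((Real.sqrt x : ℝ) : ℂ)) *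
      (if (t:ℕ) % y = m then ww x ^ (s * ((t:ℕ) / y)) else 0) := by
  rw [psi, sum_ind x y m t hm ht]

lemma sqrt_helper (n : ℕ) (a b : ℂ) :
    ((1 / ((Real.sqrt n : ℝ) : ℂ)) * a) * (starRingEnd ℂ) ((1 / ((Real.sqrt n : ℝ) : ℂ)) * b)
      = (1 / (n : ℂ)) * (a * (starRingEnd ℂ) b) := by
  rw [map_mul, map_div₀, map_one, Complex.conj_ofReal]
  have h2 : ((Real.sqrt n : ℝ) : ℂ) * ((Real.sqrt n : ℝ) : ℂ) = (n : ℂ) := by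
    rw [← Complex.ofReal_mul, Real.mul_self_sqrt (Nat.cast_nonneg n)]
    norm_cast
  rw [← h2]
  ring

lemma sum_ite_ite (p a' b' : ℕ) (ha : a' < p) (X Y : ℂ) :
    ∑ i ∈ Finset.range p, (if i = a' then X else 0) * (starRingEnd ℂ) (if i = b' then Y else 0)
      = if a' = b' then X * (starRingEnd ℂ) Y else 0 := by
  rw [Finset.sum_eq_single a']
  · rw [if_pos rfl]
    by_cases h : a' = b'
    · rw [if_pos h, if_pos h]
    · rw [if_neg h, if_neg h, map_zero, mul_zero]
  · intro i _ hia
    rw [if_neg hia, zero_mul]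
  · intro hmem
    exact absurd (Finset.mem_range.mpr ha) hmem

/-- Lemma 1, d = p^r: summing the projections onto the KD-classical pure
    states over the top p-adic digit of s (factorization x = p^α, y = p^β) equals the sum
    over the top digit of m for the factorization x̃ = p^{α-1}, ỹ = p^{β+1}. -/
theorem kd_pure_digit_identity (p r α β m s' : ℕ) (hp : p.Prime) (hr : 2 ≤ r)
    (hαβ : α + β = r) (hα1 : 1 ≤ α) (hα2 : α ≤ r - 1)
    (hm : m < p ^ β) (hs : s' < p ^ (α - 1)) :
    ∑ j ∈ Finset.range p, proj (psi (p ^ r) (p ^ α) (p ^ β) m (s' + j * p ^ (α - 1)))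
    = ∑ i ∈ Finset.range p, proj (psi (p ^ r) (p ^ (α - 1)) (p ^ (β + 1)) (m + i * p ^ β) s') := by
  have hp0 : p ≠ 0 := hp.pos.ne'
  set x := p ^ α with hxdef
  set y := p ^ β with hydef
  set A := p ^ (α - 1) with hAdef
  set Y := p ^ (β + 1) with hYdef
  have hA0 : A ≠ 0 := pow_ne_zero _ hp0
  have hy0 : 0 < y := pow_pos hp.pos _
  have hxpA : x = p * A := by
    rw [hxdef, hAdef, ← pow_succ']
    congr 1
    omega
  have hxAp : x = A * p := by rw [hxpA, mul_comm]
  have hY : Y = y * p := pow_succ p β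
  have hd1 : p ^ r = x * y := by rw [hxdef, hydef, ← pow_add, hαβ]
  have hd2 : p ^ r = A * Y := by
    rw [hAdef, hYdef, ← pow_add]
    congr 1
    omega
  have mod_decomp : ∀ v : ℕ, v % Y = v % y + y * (v / y % p) := fun v => by
    rw [hY]; exact Nat.mod_mul
  have modY_imp : ∀ v i : ℕ, v % Y = m + i * y → v % y = m := by
    intro v i h
    have h1 := mod_decomp v
    have h2 : (m + i * y) % y = m := by
      rw [Nat.add_mul_mod_self_right, Nat.mod_eq_of_lt hm]
    have h3 : (v % y + y * (v / y % p)) % y = v % y := by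
      rw [Nat.add_mul_mod_self_left]
      exact Nat.mod_mod_of_dvd _ dvd_rfl
    calc v % y = (v % y + y * (v / y % p)) % y := h3.symm
      _ = (v % Y) % y := by rw [← h1]
      _ = (m + i * y) % y := by rw [h]
      _ = m := h2
  have modY_eq : ∀ v : ℕ, v % y = m → v % Y = m + (v / y % p) * y := by
    intro v hv
    rw [mod_decomp v, hv]
    ring
  have cond_iff : ∀ v i : ℕ, v % y = m → ((v % Y = m + i * y) ↔ i = v / y % p) := by
    intro v i hv
    rw [modY_eq v hv]
    constructor
    · intro h
      exact (Nat.eq_of_mul_eq_mul_right hy0 (by omega)).symm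
    · intro h
      rw [h]
  have hmi : ∀ i ∈ Finset.range p, m + i * y < Y := by
    intro i hi
    have hip : i + 1 ≤ p := Finset.mem_range.mp hi
    calc m + i * y < (i + 1) * y := by rw [add_mul, one_mul]; omega
      _ ≤ p * y := Nat.mul_le_mul_right _ hip
      _ = Y := by rw [hY, mul_comm]
  funext t u
  rw [Matrix.sum_apply, Matrix.sum_apply]
  have ht : (t:ℕ) < x * y := by rw [← hd1]; exact t.isLt
  have hu : (u:ℕ) < x * y := by rw [← hd1]; exact u.isLt
  have htY : (t:ℕ) < A * Y := by rw [← hd2]; exact t.isLt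
  have huY : (u:ℕ) < A * Y := by rw [← hd2]; exact u.isLt
  by_cases hc : (t:ℕ) % y = m ∧ (u:ℕ) % y = m
  · -- main case
    obtain ⟨htm, hum⟩ := hc
    set kt := (t:ℕ) / y with hktdef
    set ku := (u:ℕ) / y with hkudef
    have hKt : (t:ℕ) / Y = kt / p := by rw [hY, ← Nat.div_div_eq_div_mul]
    have hKu : (u:ℕ) / Y = ku / p := by rw [hY, ← Nat.div_div_eq_div_mul]
    have hL : ∀ j ∈ Finset.range p,
        proj (psi (p ^ r) x y m (s' + j * A)) t u
          = (1 / (x:ℂ)) * (E x ((s':ℤ) * ((kt:ℤ) - (ku:ℤ))) * E p ((kt:ℤ) - (ku:ℤ)) ^ j) := by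
      intro j _
      rw [proj]
      rw [psi_eq (p ^ r) x y m _ hm t ht, psi_eq (p ^ r) x y m _ hm u hu,
        if_pos htm, if_pos hum, sqrt_helper, pow_mul_conj]
      congr 1
      rw [show (((s' + j * A) * kt : ℕ) : ℤ) - (((s' + j * A) * ku : ℕ) : ℤ)
            = (s':ℤ) * ((kt:ℤ) - (ku:ℤ)) + (j:ℤ) * ((A:ℤ) * ((kt:ℤ) - (ku:ℤ))) by
          push_cast; ring]
      rw [E_add, E_nat_mul x j, hxAp, E_mul_base A p hA0 hp0]
    have hR : ∀ i ∈ Finset.range p,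
        proj (psi (p ^ r) A Y (m + i * y) s') t u
          = (1 / (A:ℂ)) * ((if i = kt % p then ww A ^ (s' * ((t:ℕ) / Y)) else 0)
              * (starRingEnd ℂ) (if i = ku % p then ww A ^ (s' * ((u:ℕ) / Y)) else 0)) := by
      intro i hi
      rw [proj]
      rw [psi_eq (p ^ r) A Y _ s' (hmi i hi) t htY, psi_eq (p ^ r) A Y _ s' (hmi i hi) u huY,
        if_congr (cond_iff _ i htm) rfl rfl, if_congr (cond_iff _ i hum) rfl rfl,
        sqrt_helper]
    rw [Finset.sum_congr rfl hL, Finset.sum_congr rfl hR, ← Finset.mul_sum, ← Finset.mul_sum,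
      ← Finset.mul_sum, sum_E p hp0, sum_ite_ite p (kt % p) (ku % p) (Nat.mod_lt _ hp.pos) _ _,
      hKt, hKu]
    have hdvd : ((p:ℤ) ∣ (kt:ℤ) - (ku:ℤ)) ↔ kt % p = ku % p := by
      constructor
      · intro h
        exact ((Nat.modEq_iff_dvd.mpr h) : Nat.ModEq p ku kt).symm
      · intro h
        exact Nat.modEq_iff_dvd.mp (Nat.ModEq.symm (h : Nat.ModEq p kt ku))
    rw [if_congr hdvd rfl rfl]
    by_cases hk : kt % p = ku % p
    · rw [if_pos hk, if_pos hk, pow_mul_conj]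
      have h1' : (kt:ℤ) = (p:ℤ) * ((kt / p : ℕ):ℤ) + ((kt % p : ℕ):ℤ) := by
        exact_mod_cast (Nat.div_add_mod kt p).symm
      have h2' : (ku:ℤ) = (p:ℤ) * ((ku / p : ℕ):ℤ) + ((ku % p : ℕ):ℤ) := by
        exact_mod_cast (Nat.div_add_mod ku p).symm
      have hk' : ((kt % p : ℕ):ℤ) = ((ku % p : ℕ):ℤ) := by exact_mod_cast hk
      have hδ : (s':ℤ) * ((kt:ℤ) - (ku:ℤ))
          = (p:ℤ) * (((s' * (kt / p) : ℕ):ℤ) - ((s' * (ku / p) : ℕ):ℤ)) := by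
        rw [Nat.cast_mul, Nat.cast_mul, h1', h2', hk']
        ring
      rw [hδ, hxpA, E_mul_base p A hp0 hA0]
      have hpc : ((p:ℕ):ℂ) ≠ 0 := Nat.cast_ne_zero.mpr hp0
      have hAc : ((A:ℕ):ℂ) ≠ 0 := Nat.cast_ne_zero.mpr hA0
      push_cast
      field_simp
    · rw [if_neg hk, if_neg hk, mul_zero, mul_zero, mul_zero]
  · -- degenerate case: both sides vanish
    trans (0:ℂ)
    · apply Finset.sum_eq_zero
      intro j _
      rw [proj]
      rw [psi_eq (p ^ r) x y m _ hm t ht, psi_eq (p ^ r) x y m _ hm u hu]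
      rcases not_and_or.mp hc with h | h
      · rw [if_neg h, mul_zero, zero_mul]
      · rw [if_neg h, mul_zero, map_zero, mul_zero]
    · symm
      apply Finset.sum_eq_zero
      intro i hi
      rw [proj]
      rw [psi_eq (p ^ r) A Y _ s' (hmi i hi) t htY, psi_eq (p ^ r) A Y _ s' (hmi i hi) u huY]
      rcases not_and_or.mp hc with h | h
      · rw [if_neg fun hh => h (modY_imp _ i hh), mul_zero, zero_mul]
      · rw [if_neg fun hh => h (modY_imp _ i hh), mul_zero, map_zero, mul_zero]
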